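/- In the bipartite proportional allocation algorithm where each advertiser weight is multiplied by 1/(1+eps) in every iteration where its allocation exceeds (1+eps) times its capacity, after the final iteration T: every advertiser whose weight was decreased at least once has allocation at least its capacity, and every advertiser that skipped at least one decrease has allocation at most (1+eps)^2 times its capacity. -/

import Mathlib

open Finset

/-- The allocation of advertiser `a` under weights `w`: each impression `i` splits its
unit of flow among its neighborhood `N i` proportionally to the weights. -/
noncomputable def Alloc {I A : Type*} [Fintype I] [DecidableEq A]
    (N : I → Finset A) (w : A → ℝ) (a : A) : ℝ :=
  ∑ i : I, if a ∈ N i then w a / ∑ a' ∈ N i, w a' else 0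

/-- Key sandwich lemma: if all weights decrease by at most a factor `1+ε`, then each
allocation changes by the ratio of its own weight, up to a factor `1+ε`. -/
lemma alloc_sandwich {I A : Type*} [Fintype I] [DecidableEq A]
    (N : I → Finset A) (hN : ∀ i, (N i).Nonempty)
    {ε : ℝ} (hε : 0 < ε)
    {w w' : A → ℝ} (hw : ∀ b, 0 < w b)
    (hlo : ∀ b, w b / (1 + ε) ≤ w' b) (hhi : ∀ b, w' b ≤ w b) (a : A) :
    (w' a / w a) * Alloc N w a ≤ Alloc N w' a ∧
      Alloc N w' a ≤ (1 + ε) * ((w' a / w a) * Alloc N w a) := by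
  have hε1 : (0:ℝ) < 1 + ε := by linarith
  have hw' : ∀ b, 0 < w' b := fun b => lt_of_lt_of_le (div_pos (hw b) hε1) (hlo b)
  have key : ∀ i : I,
      (w' a / w a) * (if a ∈ N i then w a / ∑ b ∈ N i, w b else 0) ≤
        (if a ∈ N i then w' a / ∑ b ∈ N i, w' b else 0) ∧
      (if a ∈ N i then w' a / ∑ b ∈ N i, w' b else 0) ≤
        (1 + ε) * ((w' a / w a) * (if a ∈ N i then w a / ∑ b ∈ N i, w b else 0)) := by
    intro i
    by_cases h : a ∈ N i
    · simp only [h, if_true]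
      have hD : 0 < ∑ b ∈ N i, w b := Finset.sum_pos (fun b _ => hw b) (hN i)
      have hD' : 0 < ∑ b ∈ N i, w' b := Finset.sum_pos (fun b _ => hw' b) (hN i)
      have hDle : ∑ b ∈ N i, w' b ≤ ∑ b ∈ N i, w b :=
        Finset.sum_le_sum (fun b _ => hhi b)
      have hDlo : (∑ b ∈ N i, w b) / (1 + ε) ≤ ∑ b ∈ N i, w' b := by
        rw [Finset.sum_div]
        exact Finset.sum_le_sum (fun b _ => hlo b)
      have hrw : (w' a / w a) * (w a / ∑ b ∈ N i, w b) = w' a / ∑ b ∈ N i, w b := by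
        field_simp
        rw [mul_div_assoc, div_self (hw a).ne', mul_one]
      rw [hrw]
      constructor
      · gcongr
        exact (hw' a).le
      · have h1 : w' a / ∑ b ∈ N i, w' b ≤ w' a / ((∑ b ∈ N i, w b) / (1 + ε)) := by
          gcongr
          exact (hw' a).le
        calc w' a / ∑ b ∈ N i, w' b ≤ w' a / ((∑ b ∈ N i, w b) / (1 + ε)) := h1
          _ = (1 + ε) * (w' a / ∑ b ∈ N i, w b) := by
              rw [div_div_eq_mul_div, mul_comm (w' a), mul_div_assoc]
    · simp [h]
  constructor
  · unfold Alloc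
    rw [Finset.mul_sum]
    exact Finset.sum_le_sum fun i _ => (key i).1
  · unfold Alloc
    rw [Finset.mul_sum, Finset.mul_sum]
    exact Finset.sum_le_sum fun i _ => (key i).2

theorem bipartite_prop_alloc_final_bounds
    {I A : Type*} [Fintype I] [Fintype A] [DecidableEq A]
    (N : I → Finset A) (hN : ∀ i, (N i).Nonempty)
    (C : A → ℝ) (hC : ∀ a, 0 < C a)
    (ε : ℝ) (hε : 0 < ε) (T : ℕ)
    (α : ℕ → A → ℝ) (hα0 : ∀ a, α 0 a = 1)
    (hstep : ∀ t a, α (t + 1) a =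
      if (1 + ε) * C a ≤ Alloc N (α t) a then α t a / (1 + ε) else α t a) :
    ∀ a : A,
      ((∃ t < T, (1 + ε) * C a ≤ Alloc N (α t) a) → C a ≤ Alloc N (α T) a) ∧
      ((∃ t < T, Alloc N (α t) a < (1 + ε) * C a) →
        Alloc N (α T) a ≤ (1 + ε) ^ 2 * C a) := by
  have hε1 : (0:ℝ) < 1 + ε := by linarith
  have hpos : ∀ t b, 0 < α t b := by
    intro t
    induction t with
    | zero => intro b; rw [hα0]; norm_num
    | succ t ih =>
      intro b
      rw [hstep]
      split
      · exact div_pos (ih b) hε1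
      · exact ih b
  have hlo : ∀ t b, α t b / (1 + ε) ≤ α (t + 1) b := by
    intro t b; rw [hstep]; split
    · exact le_refl _
    · exact div_le_self (hpos t b).le (by linarith)
  have hhi : ∀ t b, α (t + 1) b ≤ α t b := by
    intro t b; rw [hstep]; split
    · exact div_le_self (hpos t b).le (by linarith)
    · exact le_refl _
  intro a
  have stepdec : ∀ t, (1 + ε) * C a ≤ Alloc N (α t) a →
      Alloc N (α t) a / (1 + ε) ≤ Alloc N (α (t + 1)) a ∧
        Alloc N (α (t + 1)) a ≤ Alloc N (α t) a := by
    intro t ht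
    have hr : α (t + 1) a / α t a = 1 / (1 + ε) := by
      rw [hstep, if_pos ht]
      rw [div_div, mul_comm, ← div_div, div_self (hpos t a).ne']
    have hs := alloc_sandwich N hN hε (hpos t) (hlo t) (hhi t) a
    rw [hr] at hs
    constructor
    · calc Alloc N (α t) a / (1 + ε) = 1 / (1 + ε) * Alloc N (α t) a := by ring
        _ ≤ _ := hs.1
    · calc Alloc N (α (t + 1)) a ≤ (1 + ε) * (1 / (1 + ε) * Alloc N (α t) a) := hs.2
        _ = Alloc N (α t) a := by field_simp
  have stepkeep : ∀ t, ¬((1 + ε) * C a ≤ Alloc N (α t) a) →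
      Alloc N (α t) a ≤ Alloc N (α (t + 1)) a ∧
        Alloc N (α (t + 1)) a ≤ (1 + ε) * Alloc N (α t) a := by
    intro t ht
    have hr : α (t + 1) a / α t a = 1 := by
      rw [hstep, if_neg ht]; exact div_self (hpos t a).ne'
    have hs := alloc_sandwich N hN hε (hpos t) (hlo t) (hhi t) a
    rw [hr, one_mul] at hs
    exact hs
  constructor
  · rintro ⟨t, htT, htrig⟩
    have key : ∀ s, C a ≤ Alloc N (α (t + 1 + s)) a := by
      intro s
      induction s with
      | zero =>
        have h1 := (stepdec t htrig).1
        have h2 : C a ≤ Alloc N (α t) a / (1 + ε) := by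
          rw [le_div_iff₀ hε1]; linarith
        exact h2.trans h1
      | succ s ih =>
        by_cases h : (1 + ε) * C a ≤ Alloc N (α (t + 1 + s)) a
        · have h1 := (stepdec _ h).1
          have h2 : C a ≤ Alloc N (α (t + 1 + s)) a / (1 + ε) := by
            rw [le_div_iff₀ hε1]; linarith
          exact h2.trans h1
        · exact le_trans ih (stepkeep _ h).1
    have hT : T = t + 1 + (T - (t + 1)) := by omega
    rw [hT]; exact key _
  · rintro ⟨t, htT, htrig⟩
    have hb : (1 + ε) * C a ≤ (1 + ε) ^ 2 * C a := by nlinarith [mul_pos (mul_pos hε1 hε) (hC a)]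
    have key : ∀ s, Alloc N (α (t + s)) a ≤ (1 + ε) ^ 2 * C a := by
      intro s
      induction s with
      | zero => exact le_trans htrig.le hb
      | succ s ih =>
        by_cases h : (1 + ε) * C a ≤ Alloc N (α (t + s)) a
        · exact le_trans (stepdec _ h).2 ih
        · push_neg at h
          calc Alloc N (α (t + s + 1)) a ≤ (1 + ε) * Alloc N (α (t + s)) a :=
                (stepkeep _ (not_le.mpr h)).2
            _ ≤ (1 + ε) * ((1 + ε) * C a) :=
                mul_le_mul_of_nonneg_left h.le hε1.le
            _ = (1 + ε) ^ 2 * C a := by ring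
    have hT : T = t + (T - t) := by omega
    rw [hT]; exact key _
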